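/- Let A be the incidence matrix of a connected graph and suppose coordinate (edge) i is a bridge (removing it disconnects the graph). If A†A is the orthogonal projection onto the row space of A, then (A†A)·e_i = e_i, i.e., e_i lies in the row space of A. -/

import Mathlib

/-- If edge `i` is a bridge of a connected graph with signed incidence matrix
`A`, then `eᵢ` lies in the row space of `A` (equivalently `(A†A)eᵢ = eᵢ`). -/
theorem bridge_in_row_space {V E : Type*} [Fintype V] [Fintype E]
    [DecidableEq V] [DecidableEq E]
    (src tgt : E → V) (hst : ∀ e, src e ≠ tgt e)
    (A : Matrix V E ℝ)
    (hA : ∀ v e, A v e =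
      if v = src e then (1 : ℝ) else if v = tgt e then -1 else 0)
    (G : SimpleGraph V)
    (hG : ∀ u v, G.Adj u v ↔ u ≠ v ∧ ∃ e,
      (src e = u ∧ tgt e = v) ∨ (src e = v ∧ tgt e = u))
    (hconn : G.Connected)
    (i : E)
    (G' : SimpleGraph V)
    (hG' : ∀ u v, G'.Adj u v ↔ u ≠ v ∧ ∃ e, e ≠ i ∧
      ((src e = u ∧ tgt e = v) ∨ (src e = v ∧ tgt e = u)))
    (hbridge : ¬ G'.Connected) :
    (Pi.single i 1 : E → ℝ) ∈ Submodule.span ℝ (Set.range fun v => A v) := by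
  classical
  set S : Finset V := Finset.univ.filter (fun v => G'.Reachable (src i) v) with hS
  -- `tgt i` is not reachable from `src i` in `G'`
  have htgt : ¬ G'.Reachable (src i) (tgt i) := by
    intro h
    apply hbridge
    rw [SimpleGraph.connected_iff]
    refine ⟨?_, hconn.nonempty⟩
    intro u v
    have huv : G.Reachable u v := hconn u v
    obtain ⟨w⟩ := huv
    induction w with
    | nil => exact SimpleGraph.Reachable.refl _
    | cons hadj rest ih =>
        refine SimpleGraph.Reachable.trans ?_ ih
        rw [hG] at hadj
        obtain ⟨hne, e, he⟩ := hadj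
        by_cases hei : e = i
        · subst hei
          rcases he with ⟨h1, h2⟩ | ⟨h1, h2⟩
          · rw [← h1, ← h2]; exact h
          · rw [← h1, ← h2]; exact h.symm
        · exact SimpleGraph.Adj.reachable ((hG' _ _).2 ⟨hne, e, hei, he⟩)
  have hiff : ∀ j, j ≠ i →
      (G'.Reachable (src i) (src j) ↔ G'.Reachable (src i) (tgt j)) := by
    intro j hj
    have hadj : G'.Adj (src j) (tgt j) :=
      (hG' _ _).2 ⟨hst j, j, hj, Or.inl ⟨rfl, rfl⟩⟩
    exact ⟨fun h => h.trans hadj.reachable, fun h => h.trans hadj.symm.reachable⟩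
  have key : (Pi.single i 1 : E → ℝ) = ∑ v ∈ S, A v := by
    funext j
    rw [show (∑ v ∈ S, A v) j = ∑ v ∈ S, A v j from Finset.sum_apply j S (fun v => (A v : E → ℝ))]
    have hAv : ∀ v, A v j =
        (if v = src j then (1 : ℝ) else 0) + (if v = tgt j then (-1 : ℝ) else 0) := by
      intro v
      rw [hA]
      by_cases h1 : v = src j
      · subst h1
        simp [hst j]
      · by_cases h2 : v = tgt j <;> simp [h1, h2, Ne.symm (hst j)]
    calc (Pi.single i 1 : E → ℝ) j
        = (if src j ∈ S then (1 : ℝ) else 0) + (if tgt j ∈ S then (-1 : ℝ) else 0) := by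
          by_cases hj : j = i
          · subst hj
            have h1 : src j ∈ S := by
              simp [hS, SimpleGraph.Reachable.refl]
            have h2 : tgt j ∉ S := by
              simp [hS, htgt]
            simp [h1, h2, Pi.single_eq_same]
          · have : (src j ∈ S) ↔ (tgt j ∈ S) := by
              simp only [hS, Finset.mem_filter, Finset.mem_univ, true_and]
              exact hiff j hj
            by_cases h1 : src j ∈ S
            · simp [h1, this.1 h1, Pi.single_eq_of_ne hj]
            · have h2 : tgt j ∉ S := fun h => h1 (this.2 h)
              simp [h1, h2, Pi.single_eq_of_ne hj]
      _ = ∑ v ∈ S, A v j := by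
          simp only [hAv, Finset.sum_add_distrib, Finset.sum_ite_eq', Finset.sum_ite_eq]
  rw [key]
  exact Submodule.sum_mem _ (fun v _ => Submodule.subset_span ⟨v, rfl⟩)
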